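/- In a recollement situation, if A is an object of A with i*A = 0, then the counit ε_A: j_!j*A → A is an epimorphism and its kernel lies in the essential image of i_*. If moreover A has enough projectives, there is a short exact sequence 0 → i_*(L_1 i*)A → j_!j*A → A → 0. -/

import Mathlib

open CategoryTheory Limits

universe v u v' u' v'' u''

/-- A recollement situation of abelian categories `A'`, `A`, `A''`. -/
structure Recollement (A' : Type u') (A : Type u) (A'' : Type u'')
    [Category.{v'} A'] [Category.{v} A] [Category.{v''} A'']
    [Abelian A'] [Abelian A] [Abelian A''] where
  /-- the functor `i^* : A → A'` -/
  iStar : A ⥤ A'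
  /-- the functor `i_* : A' → A` -/
  iLower : A' ⥤ A
  /-- the functor `i^! : A → A'` -/
  iShriek : A ⥤ A'
  /-- the functor `j_! : A'' → A` -/
  jShriek : A'' ⥤ A
  /-- the functor `j^* : A → A''` -/
  jStar : A ⥤ A''
  /-- the functor `j_* : A'' → A` -/
  jLower : A'' ⥤ A
  iStar_additive : iStar.Additive
  iLower_additive : iLower.Additive
  iShriek_additive : iShriek.Additive
  jShriek_additive : jShriek.Additive
  jStar_additive : jStar.Additive
  jLower_additive : jLower.Additive
  /-- `j_!` is left adjoint to `j^*` -/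
  adj₁ : jShriek ⊣ jStar
  /-- `j^*` is left adjoint to `j_*` -/
  adj₂ : jStar ⊣ jLower
  /-- `i^*` is left adjoint to `i_*` -/
  adj₃ : iStar ⊣ iLower
  /-- `i_*` is left adjoint to `i^!` -/
  adj₄ : iLower ⊣ iShriek
  /-- the unit `Id → j^* j_!` is an isomorphism -/
  isIso_adj₁_unit : IsIso adj₁.unit
  /-- the counit `j^* j_* → Id` is an isomorphism -/
  isIso_adj₂_counit : IsIso adj₂.counit
  /-- the counit `i^* i_* → Id` is an isomorphism -/
  isIso_adj₃_counit : IsIso adj₃.counit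
  /-- the unit `Id → i^! i_*` is an isomorphism -/
  isIso_adj₄_unit : IsIso adj₄.unit
  iLower_full : iLower.Full
  iLower_faithful : iLower.Faithful
  /-- `i_*` is an embedding onto the full subcategory of objects killed by `j^*` -/
  essImage_iLower : ∀ (X : A), iLower.essImage X ↔ IsZero (jStar.obj X)

attribute [instance] Recollement.iStar_additive Recollement.iLower_additive
  Recollement.iShriek_additive Recollement.jShriek_additive Recollement.jStar_additive
  Recollement.jLower_additive Recollement.isIso_adj₁_unit Recollement.isIso_adj₂_counit
  Recollement.isIso_adj₃_counit Recollement.isIso_adj₄_unit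
  Recollement.iLower_full Recollement.iLower_faithful

variable {A' : Type u'} {A : Type u} {A'' : Type u''}
    [Category.{v'} A'] [Category.{v} A] [Category.{v''} A'']
    [Abelian A'] [Abelian A] [Abelian A'']

namespace Recollement

/-- The norm `N : j_! ⟶ j_*`, whose component at `X` corresponds to the identity of `X`
under `Hom(j_!X, j_*X) ≅ Hom(X, j^*j_*X) ≅ Hom(X, X)`. -/
noncomputable def norm (R : Recollement A' A A'') : R.jShriek ⟶ R.jLower where
  app X := (R.adj₁.homEquiv X (R.jLower.obj X)).symm (inv (R.adj₂.counit.app X))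
  naturality {X Y} f := by
    have h : f ≫ inv (R.adj₂.counit.app Y) =
        inv (R.adj₂.counit.app X) ≫ R.jStar.map (R.jLower.map f) := by
      rw [← cancel_mono (R.adj₂.counit.app Y)]
      have := R.adj₂.counit.naturality f
      simp only [Functor.comp_map, Functor.id_map] at this
      simp [this]
    rw [← Adjunction.homEquiv_naturality_left_symm, h,
      Adjunction.homEquiv_naturality_right_symm]

/-- The intermediate extension `j_!* := Im (N : j_! → j_*)`. -/
noncomputable def jMid (R : Recollement A' A A'') : A'' ⥤ A where
  obj X := image (R.norm.app X)
  map {X Y} f := image.map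
    ((Arrow.homMk _ _ (R.norm.naturality f) :
      Arrow.mk (R.norm.app X) ⟶ Arrow.mk (R.norm.app Y)))
  map_id X := by
    have : (Arrow.homMk _ _ (R.norm.naturality (𝟙 X)) :
        Arrow.mk (R.norm.app X) ⟶ Arrow.mk (R.norm.app X)) = 𝟙 (Arrow.mk (R.norm.app X)) := by
      ext <;> simp
    rw [this, image.map_id]
    rfl
  map_comp {X Y Z} f g := by
    rw [← image.map_comp]
    congr 1
    ext <;> simp

end Recollement


namespace Recollement

open Abelian

variable (R : Recollement A' A A'')

lemma isIso_jStar_map_counit (Y : A) : IsIso (R.jStar.map (R.adj₁.counit.app Y)) := by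
  have h := R.adj₁.right_triangle_components Y
  have : IsIso (R.adj₁.unit.app (R.jStar.obj Y) ≫ R.jStar.map (R.adj₁.counit.app Y)) := by
    rw [h]; exact ⟨⟨𝟙 _, by simp, by simp⟩⟩
  exact IsIso.of_isIso_comp_left (R.adj₁.unit.app (R.jStar.obj Y)) _

lemma isIso_counit_jShriek (Z : A'') : IsIso (R.adj₁.counit.app (R.jShriek.obj Z)) := by
  have h := R.adj₁.left_triangle_components Z
  have : IsIso (R.jShriek.map (R.adj₁.unit.app Z) ≫ R.adj₁.counit.app (R.jShriek.obj Z)) := by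
    rw [h]; exact ⟨⟨𝟙 _, by simp, by simp⟩⟩
  exact IsIso.of_isIso_comp_left (R.jShriek.map (R.adj₁.unit.app Z)) _

lemma isZero_jStar_iLower (W : A') : IsZero (R.jStar.obj (R.iLower.obj W)) :=
  (R.essImage_iLower _).mp ⟨W, ⟨Iso.refl _⟩⟩

lemma isZero_iStar_jShriek (Z : A'') : IsZero (R.iStar.obj (R.jShriek.obj Z)) := by
  rw [IsZero.iff_id_eq_zero]
  apply (R.adj₃.homEquiv _ _).injective
  apply (R.adj₁.homEquiv _ _).injective
  exact (R.isZero_jStar_iLower _).eq_of_tgt _ _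

lemma essImage_cokernel_counit (Y : A) :
    R.iLower.essImage (cokernel (R.adj₁.counit.app Y)) := by
  apply (R.essImage_iLower _).mpr
  haveI := R.adj₂.leftAdjoint_preservesColimits
  haveI := R.isIso_jStar_map_counit Y
  exact (isZero_zero _).of_iso
    (PreservesCokernel.iso R.jStar (R.adj₁.counit.app Y) ≪≫ cokernel.ofEpi _)

lemma essImage_kernel_counit (Y : A) :
    R.iLower.essImage (kernel (R.adj₁.counit.app Y)) := by
  apply (R.essImage_iLower _).mpr
  haveI := R.adj₁.rightAdjoint_preservesLimits
  haveI := R.isIso_jStar_map_counit Y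
  exact (isZero_zero _).of_iso
    (PreservesKernel.iso R.jStar (R.adj₁.counit.app Y) ≪≫ kernel.ofMono _)

lemma hom_ext_to_iLower {Y : A} {W : A'} (hX : IsZero (R.iStar.obj Y))
    (f g : Y ⟶ R.iLower.obj W) : f = g := by
  apply (R.adj₃.homEquiv _ _).symm.injective
  exact hX.eq_of_src _ _

lemma epi_counit {X : A} (hX : IsZero (R.iStar.obj X)) : Epi (R.adj₁.counit.app X) := by
  apply Abelian.epi_of_cokernel_π_eq_zero
  obtain ⟨W, ⟨e⟩⟩ := R.essImage_cokernel_counit X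
  have h : cokernel.π (R.adj₁.counit.app X) ≫ e.inv = 0 :=
    R.hom_ext_to_iLower hX _ _
  have : cokernel.π (R.adj₁.counit.app X) = (cokernel.π (R.adj₁.counit.app X) ≫ e.inv) ≫ e.hom := by
    simp
  rw [this, h, zero_comp]

end Recollement


namespace Recollement

open Abelian Abelian.Pseudoelement
open scoped Pseudoelement

variable (R : Recollement A' A A'')

lemma epi_iStar_map_of_exact_epi {X₁ X₂ X₃ : A} (u : X₁ ⟶ X₂) (v : X₂ ⟶ X₃) (w : u ≫ v = 0)
    (hex : (ShortComplex.mk u v w).Exact) [Epi v] (h3 : IsZero (R.iStar.obj X₃)) :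
    Epi (R.iStar.map u) := by
  haveI : PreservesColimitsOfSize.{0,0} R.iStar := R.adj₃.leftAdjoint_preservesColimits
  have hex' := hex.map_of_epi_of_preservesCokernel R.iStar inferInstance inferInstance
  exact hex'.epi_f (h3.eq_of_tgt _ _)

lemma mono_iStar_map_of_essImage {X₁ X₂ : A} (m : X₁ ⟶ X₂) [Mono m]
    (h1 : R.iLower.essImage X₁) (h2 : R.iLower.essImage X₂) : Mono (R.iStar.map m) := by
  obtain ⟨W₁, ⟨e₁⟩⟩ := h1
  obtain ⟨W₂, ⟨e₂⟩⟩ := h2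
  set t := R.iLower.preimage (e₁.hom ≫ m ≫ e₂.inv) with ht
  have hmt : R.iLower.map t = e₁.hom ≫ m ≫ e₂.inv := R.iLower.map_preimage _
  have hm : m = e₁.inv ≫ R.iLower.map t ≫ e₂.hom := by rw [hmt]; simp
  haveI : Mono (R.iLower.map t) := by rw [hmt]; exact mono_comp _ _
  haveI : Mono t := R.iLower.mono_of_mono_map inferInstance
  have hnat := R.adj₃.counit.naturality t
  simp only [Functor.comp_map, Functor.id_map] at hnat
  haveI : Mono (R.iStar.map (R.iLower.map t)) := by
    have : R.iStar.map (R.iLower.map t) =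
        R.adj₃.counit.app W₁ ≫ t ≫ inv (R.adj₃.counit.app W₂) := by
      rw [← Category.assoc, ← hnat, Category.assoc, IsIso.hom_inv_id, Category.comp_id]
    rw [this]; exact mono_comp _ _
  rw [hm, Functor.map_comp, Functor.map_comp]
  exact mono_comp _ _

lemma isIso_iStar_map_cokernelπ_counit (Y : A) :
    IsIso (R.iStar.map (cokernel.π (R.adj₁.counit.app Y))) := by
  haveI : PreservesColimitsOfSize.{0,0} R.iStar := R.adj₃.leftAdjoint_preservesColimits
  have hex := ShortComplex.exact_cokernel (R.adj₁.counit.app Y)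
  have hex' := hex.map_of_epi_of_preservesCokernel R.iStar inferInstance inferInstance
  haveI : Epi (R.iStar.map (cokernel.π (R.adj₁.counit.app Y))) :=
    preserves_epi_of_preservesColimit R.iStar _
  haveI : Mono (R.iStar.map (cokernel.π (R.adj₁.counit.app Y))) :=
    hex'.mono_g ((R.isZero_iStar_jShriek (R.jStar.obj Y)).eq_of_src _ _)
  exact isIso_of_mono_of_epi _

lemma mono_iStar_map_of_exact {X₁ X₂ X₃ : A} (u : X₁ ⟶ X₂) (v : X₂ ⟶ X₃) (w : u ≫ v = 0)
    (hex : (ShortComplex.mk u v w).Exact) [Mono u] [Epi v]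
    (hc : IsIso (R.adj₁.counit.app X₃)) : Mono (R.iStar.map u) := by
  haveI : PreservesColimitsOfSize.{0,0} R.jStar := R.adj₂.leftAdjoint_preservesColimits
  haveI : PreservesColimitsOfSize.{0,0} R.jShriek := R.adj₁.leftAdjoint_preservesColimits
  set G := R.jStar ⋙ R.jShriek with hG
  set ε₁ := R.adj₁.counit.app X₁
  set ε₂ := R.adj₁.counit.app X₂
  set ε₃ := R.adj₁.counit.app X₃
  -- the top row is exact with epi second map
  haveI : Epi (G.map v) := preserves_epi_of_preservesColimit G v
  have hw' : G.map u ≫ G.map v = 0 := by rw [← G.map_comp, w, G.map_zero]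
  have hextop : (ShortComplex.mk (G.map u) (G.map v) hw').Exact := by
    have := hex.map_of_epi_of_preservesCokernel G inferInstance inferInstance
    exact this
  -- naturality of the counit
  have hnat₁ : G.map u ≫ ε₂ = ε₁ ≫ u := R.adj₁.counit.naturality u
  have hnat₂ : G.map v ≫ ε₃ = ε₂ ≫ v := R.adj₁.counit.naturality v
  -- the induced map on cokernels of counits
  set cu : cokernel ε₁ ⟶ cokernel ε₂ := cokernel.map ε₁ ε₂ (G.map u) u hnat₁.symm with hcu
  have hcomm : cokernel.π ε₁ ≫ cu = u ≫ cokernel.π ε₂ := by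
    simp [hcu, cokernel.map]
  -- `cu` is a monomorphism: pseudoelement chase
  haveI : Mono cu := by
    apply mono_of_zero_of_map_zero
    intro a ha
    obtain ⟨r, hr⟩ := pseudo_surjective_of_epi (cokernel.π ε₁) a
    have h1 : pseudoApply (cokernel.π ε₂) (pseudoApply u r) = 0 := by
      rw [← Abelian.Pseudoelement.comp_apply, ← hcomm, Abelian.Pseudoelement.comp_apply, hr, ha]
    obtain ⟨p, hp⟩ := pseudo_exact_of_exact (ShortComplex.exact_cokernel ε₂) _ h1
    have h2 : pseudoApply ε₃ (pseudoApply (G.map v) p) = 0 := by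
      rw [← Abelian.Pseudoelement.comp_apply, hnat₂, Abelian.Pseudoelement.comp_apply, hp, ← Abelian.Pseudoelement.comp_apply, w]
      exact zero_apply _ _
    have h3 : pseudoApply (G.map v) p = 0 := by
      haveI : Mono ε₃ := by exact @IsIso.mono_of_iso _ _ _ _ _ hc
      exact zero_of_map_zero _ (pseudo_injective_of_mono _) _ h2
    obtain ⟨q, hq⟩ := pseudo_exact_of_exact hextop _ h3
    have h4 : pseudoApply u (pseudoApply ε₁ q) = pseudoApply u r := by
      rw [← Abelian.Pseudoelement.comp_apply, ← hnat₁, Abelian.Pseudoelement.comp_apply, hq, hp]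
    have h5 : pseudoApply ε₁ q = r := pseudo_injective_of_mono _ h4
    rw [← hr, ← h5, ← Abelian.Pseudoelement.comp_apply, cokernel.condition]
    exact zero_apply _ _
  -- transfer the mono along `i^*`
  haveI : Mono (R.iStar.map cu) :=
    R.mono_iStar_map_of_essImage cu (R.essImage_cokernel_counit X₁) (R.essImage_cokernel_counit X₂)
  haveI := R.isIso_iStar_map_cokernelπ_counit X₁
  have : R.iStar.map u ≫ R.iStar.map (cokernel.π ε₂) =
      R.iStar.map (cokernel.π ε₁) ≫ R.iStar.map cu := by
    rw [← Functor.map_comp, ← Functor.map_comp, hcomm]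
  haveI : Mono (R.iStar.map u ≫ R.iStar.map (cokernel.π ε₂)) := by
    rw [this]; exact mono_comp _ _
  exact mono_of_mono (R.iStar.map u) (R.iStar.map (cokernel.π ε₂))

end Recollement


namespace Recollement

open Abelian

variable (R : Recollement A' A A'')

lemma kernel_iStar_iota_iso {X : A} (hX : IsZero (R.iStar.obj X)) {P₀ : A}
    (hP : Projective P₀) (π₀ : P₀ ⟶ X) (hπ : Epi π₀) :
    Nonempty (kernel (R.iStar.map (kernel.ι π₀)) ≅
      R.iStar.obj (kernel (R.adj₁.counit.app X))) := by
  haveI : Projective P₀ := hP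
  set ε := R.adj₁.counit.app X with hε
  haveI : Epi ε := R.epi_counit hX
  -- the canonical monomorphism from `kernel π₀` to the pullback of `π₀` and `ε`
  have hz0 : kernel.ι π₀ ≫ π₀ = 0 ≫ ε := by simp
  set z : kernel π₀ ⟶ pullback π₀ ε := pullback.lift (kernel.ι π₀) 0 hz0 with hz
  have hzfst : z ≫ pullback.fst π₀ ε = kernel.ι π₀ := pullback.lift_fst _ _ _
  have hzsnd : z ≫ pullback.snd π₀ ε = 0 := pullback.lift_snd _ _ _
  haveI : Epi (pullback.snd π₀ ε) := Abelian.epi_pullback_of_epi_f π₀ ε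
  haveI : Mono z := by
    have : Mono (z ≫ pullback.fst π₀ ε) := by rw [hzfst]; infer_instance
    exact mono_of_mono z (pullback.fst π₀ ε)
  -- `z` is a kernel of the second projection
  have hlim : IsLimit (KernelFork.ofι z hzsnd) := by
    refine KernelFork.IsLimit.ofι z hzsnd
      (fun {T} a ha => kernel.lift π₀ (a ≫ pullback.fst π₀ ε) ?_) (fun {T} a ha => ?_) ?_
    · rw [Category.assoc, pullback.condition, ← Category.assoc, ha, zero_comp]
    · apply pullback.hom_ext
      · rw [Category.assoc, hzfst, kernel.lift_ι]
      · rw [Category.assoc, hzsnd, comp_zero, ha]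
    · intro T a ha m hm
      rw [← cancel_mono z, hm]
      apply pullback.hom_ext
      · rw [Category.assoc, hzfst, kernel.lift_ι]
      · rw [Category.assoc, hzsnd, comp_zero, ha]
  have hexN : (ShortComplex.mk z (pullback.snd π₀ ε) hzsnd).Exact :=
    ShortComplex.exact_of_f_is_kernel _ hlim
  -- `i^*` inverts `z`
  haveI : Mono (R.iStar.map z) := by
    refine R.mono_iStar_map_of_exact z (pullback.snd π₀ ε) hzsnd hexN ?_
    exact R.isIso_counit_jShriek (R.jStar.obj X)
  haveI : Epi (R.iStar.map z) := by
    refine R.epi_iStar_map_of_exact_epi z (pullback.snd π₀ ε) hzsnd hexN ?_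
    exact R.isZero_iStar_jShriek (R.jStar.obj X)
  haveI : IsIso (R.iStar.map z) := isIso_of_mono_of_epi _
  -- splitting of the pullback as `kernel ε ⊞ P₀`
  set f : P₀ ⟶ (R.jStar ⋙ R.jShriek).obj X := Projective.factorThru π₀ ε with hf
  have hfε : f ≫ ε = π₀ := Projective.factorThru_comp _ _
  have hs0 : 𝟙 P₀ ≫ π₀ = f ≫ ε := by rw [Category.id_comp, hfε]
  set s : P₀ ⟶ pullback π₀ ε := pullback.lift (𝟙 P₀) f hs0 with hs
  have hκt0 : (0 : kernel ε ⟶ P₀) ≫ π₀ = kernel.ι ε ≫ ε := by simp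
  set κt : kernel ε ⟶ pullback π₀ ε := pullback.lift 0 (kernel.ι ε) hκt0 with hκt
  have hr0 : (pullback.snd π₀ ε - pullback.fst π₀ ε ≫ f) ≫ ε = 0 := by
    rw [Preadditive.sub_comp, Category.assoc, hfε, pullback.condition, sub_self]
  set r : pullback π₀ ε ⟶ kernel ε := kernel.lift ε _ hr0 with hr
  have hrκ : r ≫ kernel.ι ε = pullback.snd π₀ ε - pullback.fst π₀ ε ≫ f :=
    kernel.lift_ι _ _ _
  have hκtr : κt ≫ r = 𝟙 (kernel ε) := by
    rw [← cancel_mono (kernel.ι ε), Category.assoc, hrκ, Preadditive.comp_sub, hκt]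
    rw [pullback.lift_snd, ← Category.assoc, pullback.lift_fst, zero_comp, sub_zero,
      Category.id_comp]
  have hκtfst : κt ≫ pullback.fst π₀ ε = 0 := by rw [hκt]; exact pullback.lift_fst _ _ _
  have hκtsnd : κt ≫ pullback.snd π₀ ε = kernel.ι ε := by rw [hκt]; exact pullback.lift_snd _ _ _
  have hsfst : s ≫ pullback.fst π₀ ε = 𝟙 P₀ := by rw [hs]; exact pullback.lift_fst _ _ _
  have hssnd : s ≫ pullback.snd π₀ ε = f := by rw [hs]; exact pullback.lift_snd _ _ _
  have hsr : s ≫ r = 0 := by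
    rw [← cancel_mono (kernel.ι ε), Category.assoc, hrκ, Preadditive.comp_sub, zero_comp,
      hssnd, ← Category.assoc, hsfst, Category.id_comp, sub_self]
  have eN_hom_inv : biprod.desc κt s ≫ biprod.lift r (pullback.fst π₀ ε) =
      𝟙 (kernel ε ⊞ P₀) := by
    apply biprod.hom_ext' <;> apply biprod.hom_ext <;>
      simp only [biprod.inl_desc_assoc, biprod.inr_desc_assoc, Category.assoc,
        biprod.lift_fst, biprod.lift_snd, Category.comp_id, Category.id_comp,
        biprod.inl_fst, biprod.inl_snd, biprod.inr_fst, biprod.inr_snd]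
    · rw [hκtr]
    · rw [hκtfst]
    · rw [hsr]
    · rw [hsfst]
  have eN_inv_hom : biprod.lift r (pullback.fst π₀ ε) ≫ biprod.desc κt s =
      𝟙 (pullback π₀ ε) := by
    rw [biprod.lift_desc]
    apply pullback.hom_ext
    · rw [Preadditive.add_comp, Category.assoc, Category.assoc, hκtfst, comp_zero,
        hsfst, Category.comp_id, zero_add, Category.id_comp]
    · rw [Preadditive.add_comp, Category.assoc, Category.assoc, hκtsnd, hssnd, hrκ,
        Category.id_comp, sub_add_cancel]
  set eN : kernel ε ⊞ P₀ ≅ pullback π₀ ε :=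
    ⟨biprod.desc κt s, biprod.lift r (pullback.fst π₀ ε), eN_hom_inv, eN_inv_hom⟩ with heN
  set wN : kernel π₀ ⟶ kernel ε ⊞ P₀ := z ≫ eN.inv with hwN
  haveI : IsIso eN.inv := ⟨⟨eN.hom, eN.inv_hom_id, eN.hom_inv_id⟩⟩
  haveI : IsIso (R.iStar.map eN.inv) := Functor.map_isIso _ _
  haveI : IsIso (R.iStar.map wN) := by
    rw [hwN, Functor.map_comp]
    exact IsIso.comp_isIso
  have hwsnd : wN ≫ biprod.snd = kernel.ι π₀ := by
    rw [hwN, Category.assoc, heN]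
    show z ≫ biprod.lift r (pullback.fst π₀ ε) ≫ biprod.snd = kernel.ι π₀
    rw [biprod.lift_snd, hzfst]
  -- biproduct preservation
  haveI : PreservesColimitsOfSize.{0,0} R.iStar := R.adj₃.leftAdjoint_preservesColimits
  haveI hbb : PreservesBinaryBiproducts R.iStar :=
    preservesBinaryBiproducts_of_preservesBinaryCoproducts _
  haveI : PreservesBinaryBiproduct (kernel ε) P₀ R.iStar := hbb.preserves
  have hmb : R.iStar.map (biprod.snd : kernel ε ⊞ P₀ ⟶ P₀) =
      (R.iStar.mapBiprod (kernel ε) P₀).hom ≫ biprod.snd := by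
    rw [Functor.mapBiprod_hom, biprod.lift_snd]
  have key : R.iStar.map (kernel.ι π₀) =
      (R.iStar.map wN ≫ (R.iStar.mapBiprod (kernel ε) P₀).hom) ≫ biprod.snd := by
    rw [← hwsnd, Functor.map_comp, hmb, Category.assoc]
  refine ⟨?_⟩
  have i1 : kernel (R.iStar.map (kernel.ι π₀)) ≅
      kernel (biprod.snd : R.iStar.obj (kernel ε) ⊞ R.iStar.obj P₀ ⟶ R.iStar.obj P₀) := by
    rw [key]
    exact kernelIsIsoComp _ _
  exact i1 ≪≫ kernelBiprodSndIso

end Recollement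


namespace Recollement

variable (R : Recollement A' A A'')

lemma leftDerived_one_iso [EnoughProjectives A] {X : A} (P : ProjectiveResolution X) :
    Nonempty ((R.iStar.leftDerived 1).obj X ≅
      kernel (R.iStar.map (kernel.ι (P.π.f 0 : P.complex.X 0 ⟶ X)))) := by
  haveI : PreservesColimitsOfSize.{0,0} R.iStar := R.adj₃.leftAdjoint_preservesColimits
  set πX : P.complex.X 0 ⟶ X := P.π.f 0 with hπX
  set e' : P.complex.X 1 ⟶ kernel πX :=
    kernel.lift πX (P.complex.d 1 0) P.complex_d_comp_π_f_zero with he'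
  have he'ι : e' ≫ kernel.ι πX = P.complex.d 1 0 := kernel.lift_ι _ _ _
  haveI : Epi e' := by
    have h := P.exact₀
    rw [ShortComplex.exact_iff_epi_kernel_lift] at h
    exact h
  have hw1 : P.complex.d 2 1 ≫ e' = 0 := by
    rw [← cancel_mono (kernel.ι πX), Category.assoc, he'ι, zero_comp]
    exact P.complex.d_comp_d 2 1 0
  have hex1 : (ShortComplex.mk (P.complex.d 2 1) e' hw1).Exact := by
    have h : (ShortComplex.mk (P.complex.d 2 1) (P.complex.d 1 0)
        (P.complex.d_comp_d 2 1 0)).Exact := P.exact_succ 0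
    rw [ShortComplex.exact_iff_of_epi_of_isIso_of_mono
      (φ := ({ τ₁ := 𝟙 _, τ₂ := 𝟙 _, τ₃ := kernel.ι πX,
               comm₁₂ := by simp, comm₂₃ := by simp [he'ι] } :
        ShortComplex.mk (P.complex.d 2 1) e' hw1 ⟶
          ShortComplex.mk (P.complex.d 2 1) (P.complex.d 1 0) (P.complex.d_comp_d 2 1 0)))]
    exact h
  have hFex := hex1.map_of_epi_of_preservesCokernel R.iStar inferInstance inferInstance
  haveI : Epi (R.iStar.map e') := preserves_epi_of_preservesColimit R.iStar e'
  haveI : Epi ((ShortComplex.mk (P.complex.d 2 1) e' hw1).map R.iStar).g :=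
    inferInstanceAs (Epi (R.iStar.map e'))
  have hcolim : IsColimit (CokernelCofork.ofπ (R.iStar.map e')
      (show R.iStar.map (P.complex.d 2 1) ≫ R.iStar.map e' = 0 by
        rw [← Functor.map_comp, hw1, Functor.map_zero])) := hFex.gIsCokernel
  set θiso : cokernel (R.iStar.map (P.complex.d 2 1)) ≅ R.iStar.obj (kernel πX) :=
    IsColimit.coconePointUniqueUpToIso
      (colimit.isColimit (parallelPair (R.iStar.map (P.complex.d 2 1)) 0)) hcolim with hθiso
  have hθ : cokernel.π (R.iStar.map (P.complex.d 2 1)) ≫ θiso.hom = R.iStar.map e' :=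
    IsColimit.comp_coconePointUniqueUpToIso_hom _ _ WalkingParallelPair.one
  -- the explicit short complex computing homology in degree 1
  set SF : ShortComplex A' := ShortComplex.mk (R.iStar.map (P.complex.d 2 1))
    (R.iStar.map (P.complex.d 1 0))
    (by rw [← Functor.map_comp, P.complex.d_comp_d, Functor.map_zero]) with hSF
  set D := (R.iStar.mapHomologicalComplex (ComplexShape.down ℕ)).obj P.complex with hD
  have i₁ : (R.iStar.leftDerived 1).obj X ≅
      (HomologicalComplex.homologyFunctor A' (ComplexShape.down ℕ) 1).obj D :=
    P.isoLeftDerivedObj R.iStar 1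
  have i₂ : D.homology 1 ≅ (D.sc' 2 1 0).homology :=
    ShortComplex.homologyMapIso (D.isoSc' 2 1 0 (by simp) (by simp))
  have i₃ : (D.sc' 2 1 0).homology ≅ SF.homology :=
    ShortComplex.homologyMapIso
      (ShortComplex.isoMk (Iso.refl _) (Iso.refl _) (Iso.refl _) (by simp [hSF, hD]; exact (Category.id_comp _).trans (Category.comp_id _).symm)
        (by simp [hSF, hD]; exact (Category.id_comp _).trans (Category.comp_id _).symm))
  have i₄ : SF.homology ≅ kernel (cokernel.desc SF.f SF.g SF.zero) :=
    SF.homologyIsoKernelDesc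
  have hdesc : cokernel.desc SF.f SF.g SF.zero = θiso.hom ≫ R.iStar.map (kernel.ι πX) := by
    rw [← cancel_epi (cokernel.π SF.f)]
    rw [cokernel.π_desc]
    show R.iStar.map (P.complex.d 1 0) =
      cokernel.π (R.iStar.map (P.complex.d 2 1)) ≫ θiso.hom ≫ R.iStar.map (kernel.ι πX)
    rw [← Category.assoc, hθ, ← Functor.map_comp, he'ι]
  have i₅ : kernel (cokernel.desc SF.f SF.g SF.zero) ≅
      kernel (R.iStar.map (kernel.ι πX)) := by
    rw [hdesc]
    exact kernelIsIsoComp _ _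
  exact ⟨i₁ ≪≫ i₂ ≪≫ i₃ ≪≫ i₄ ≪≫ i₅⟩

end Recollement

/-- If `i^*A = 0` then the counit `ε_A : j_!j^*A → A` is epi with kernel in the
essential image of `i_*`; with enough projectives there is a short exact sequence
`0 → i_*(L_1 i^*)A → j_!j^*A → A → 0`. -/
theorem recollement_counit_epi_of_iStar_isZero (R : Recollement A' A A'')
    (X : A) (hX : IsZero (R.iStar.obj X)) :
    Epi (R.adj₁.counit.app X) ∧
    R.iLower.essImage (kernel (R.adj₁.counit.app X)) ∧
    (∀ [EnoughProjectives A],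
      ∃ (ι : R.iLower.obj ((R.iStar.leftDerived 1).obj X) ⟶ R.jShriek.obj (R.jStar.obj X))
        (w : ι ≫ R.adj₁.counit.app X = 0),
        (ShortComplex.mk _ _ w).ShortExact) := by
  classical
  refine ⟨R.epi_counit hX, R.essImage_kernel_counit X, ?_⟩
  intro _
  obtain ⟨P⟩ := (HasProjectiveResolution.out (Z := X))
  obtain ⟨α⟩ := R.leftDerived_one_iso P
  obtain ⟨β⟩ := R.kernel_iStar_iota_iso hX (P.projective 0)
    (P.π.f 0 : P.complex.X 0 ⟶ X) (inferInstanceAs (Epi (P.π.f 0)))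
  obtain ⟨W, ⟨eK⟩⟩ := R.essImage_kernel_counit X
  haveI : IsIso (R.adj₃.counit.app W) := inferInstance
  have γ : R.iLower.obj (R.iStar.obj (kernel (R.adj₁.counit.app X))) ≅
      kernel (R.adj₁.counit.app X) :=
    R.iLower.mapIso (R.iStar.mapIso eK.symm) ≪≫
      R.iLower.mapIso (asIso (R.adj₃.counit.app W)) ≪≫ eK
  have Φ : R.iLower.obj ((R.iStar.leftDerived 1).obj X) ≅ kernel (R.adj₁.counit.app X) :=
    R.iLower.mapIso (α ≪≫ β) ≪≫ γ
  haveI : Epi (R.adj₁.counit.app X) := R.epi_counit hX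
  refine ⟨Φ.hom ≫ kernel.ι (R.adj₁.counit.app X), by rw [Category.assoc, kernel.condition,
    comp_zero], ?_⟩
  have hlim : IsLimit (KernelFork.ofι (Φ.hom ≫ kernel.ι (R.adj₁.counit.app X))
      (show (Φ.hom ≫ kernel.ι (R.adj₁.counit.app X)) ≫ R.adj₁.counit.app X = 0 by
        rw [Category.assoc, kernel.condition, comp_zero])) := by
    refine KernelFork.IsLimit.ofι _ _
      (fun {T} k hk => kernel.lift (R.adj₁.counit.app X) k hk ≫ Φ.inv)
      (fun {T} k hk => by rw [Category.assoc, ← Category.assoc Φ.inv, Iso.inv_hom_id,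
        Category.id_comp, kernel.lift_ι]) ?_
    intro T k hk m hm
    haveI : Mono (Φ.hom ≫ kernel.ι (R.adj₁.counit.app X)) := mono_comp _ _
    rw [← cancel_mono (Φ.hom ≫ kernel.ι (R.adj₁.counit.app X)), hm]
    rw [Category.assoc, ← Category.assoc Φ.inv, Iso.inv_hom_id, Category.id_comp, kernel.lift_ι]
  exact { exact := ShortComplex.exact_of_f_is_kernel _ hlim
          mono_f := mono_comp _ _
          epi_g := inferInstance }
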